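/- Let G be a finite simple graph, v a vertex of G, and G' = G − v the induced subgraph obtained by deleting v and all edges incident to v. Let σ be a Scarf face of I(G'), let w_1, …, w_t (t ≥ 1) be distinct elements of N_G(v), and suppose dist_G(σ, vw_i) ≥ 2 for all 1 ≤ i ≤ t. Then: (1) if w_i w_j ∈ E(G) for some i ≠ j, then σ ∪ {vw_1, …, vw_t} is not a Scarf face of I(G' ∪ {vw_1, …, vw_t}); and (2) if w_i w_j ∉ E(G) for all i ≠ j, then σ ∪ {vw_1, …, vw_t} is a Scarf face of I(G' ∪ {vw_1, …, vw_t}) and also a Scarf face of I(G). Here G' ∪ {vw_1, …, vw_t} denotes the subgraph of G obtained from G' by adding back the vertex v and the edges vw_1, …, vw_t. -/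

import Mathlib

/-- The monomial (exponent vector) of an edge: `1` on its endpoints, `0` elsewhere. -/
def edgeMon {V : Type*} [DecidableEq V] (e : Sym2 V) : V → ℕ :=
  fun x => if x ∈ e then 1 else 0

/-- The lcm (componentwise max) of the monomials of a finite set of edges. -/
def eLcm {V : Type*} [DecidableEq V] (σ : Finset (Sym2 V)) : V → ℕ :=
  σ.sup edgeMon

/-- `σ` is a Scarf face of the edge ideal `I(G)`, identified with a set of edges of `G`:
its lcm is distinct from the lcm of any other set of edges of `G`. -/
def IsScarf {V : Type*} [DecidableEq V] (G : SimpleGraph V) (σ : Finset (Sym2 V)) : Prop :=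
  (∀ e ∈ σ, e ∈ G.edgeSet) ∧
    ∀ τ : Finset (Sym2 V), (∀ e ∈ τ, e ∈ G.edgeSet) → eLcm τ = eLcm σ → τ = σ

/-- `dist_G(e, f) = 0`: the two edges share a vertex. -/
def Dist0 {V : Type*} (e f : Sym2 V) : Prop := ∃ x, x ∈ e ∧ x ∈ f

/-- `dist_G(e, f) = 1`: the edges are vertex-disjoint, but some endpoint of `e` is
adjacent in `G` to some endpoint of `f`. -/
def Dist1 {V : Type*} (G : SimpleGraph V) (e f : Sym2 V) : Prop :=
  ¬ Dist0 e f ∧ ∃ x ∈ e, ∃ y ∈ f, G.Adj x y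

/-- The graph `G - v`: delete the vertex `v`, i.e. all edges incident to `v`
(keeping the vertex set). -/
def delVert {V : Type*} (G : SimpleGraph V) (v : V) : SimpleGraph V where
  Adj x y := G.Adj x y ∧ x ≠ v ∧ y ≠ v
  symm := ⟨fun x y h => ⟨h.1.symm, h.2.2, h.2.1⟩⟩
  loopless := ⟨fun x h => G.irrefl h.1⟩

/-- The graph `G' ∪ {vw₁, …, vwₜ}`: obtained from `G - v` by adding back the vertex `v`
and the edges `vw` for `w ∈ W`. -/
def addBack {V : Type*} (G : SimpleGraph V) (v : V) (W : Finset V) : SimpleGraph V :=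
  SimpleGraph.fromEdgeSet ((delVert G v).edgeSet ∪ {e : Sym2 V | ∃ w ∈ W, e = s(v, w)})

lemma eLcm_apply {V : Type*} [DecidableEq V] (σ : Finset (Sym2 V)) (x : V) :
    eLcm σ x = σ.sup fun e => if x ∈ e then 1 else 0 := by
  simp [eLcm, edgeMon, Finset.sup_apply]

lemma eLcm_le_one {V : Type*} [DecidableEq V] (σ : Finset (Sym2 V)) (x : V) :
    eLcm σ x ≤ 1 := by
  rw [eLcm_apply]
  exact Finset.sup_le fun e _ => by split <;> simp

lemma eLcm_eq_zero_iff {V : Type*} [DecidableEq V] (σ : Finset (Sym2 V)) (x : V) :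
    eLcm σ x = 0 ↔ ∀ e ∈ σ, x ∉ e := by
  rw [eLcm_apply]
  rw [show (0 : ℕ) = ⊥ from rfl, Finset.sup_eq_bot_iff]
  constructor
  · intro h e he hx
    have := h e he
    simp [hx] at this
  · intro h e he
    simp [h e he]

lemma eLcm_eq_iff {V : Type*} [DecidableEq V] (τ σ : Finset (Sym2 V)) :
    eLcm τ = eLcm σ ↔ ∀ x, (∃ e ∈ τ, x ∈ e) ↔ (∃ e ∈ σ, x ∈ e) := by
  constructor
  · intro h x
    rw [← not_iff_not]
    push_neg
    rw [← eLcm_eq_zero_iff, ← eLcm_eq_zero_iff, h]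
  · intro h
    funext x
    have h1 := eLcm_le_one τ x
    have h2 := eLcm_le_one σ x
    have hz : eLcm τ x = 0 ↔ eLcm σ x = 0 := by
      rw [eLcm_eq_zero_iff, eLcm_eq_zero_iff, ← not_iff_not]
      push_neg
      exact h x
    rcases Nat.le_one_iff_eq_zero_or_eq_one.mp h1 with ha | ha <;>
      rcases Nat.le_one_iff_eq_zero_or_eq_one.mp h2 with hb | hb <;>
      simp [ha, hb] at hz ⊢

lemma delVert_not_mem {V : Type*} (G : SimpleGraph V) (v : V) (e : Sym2 V)
    (he : e ∈ (delVert G v).edgeSet) : v ∉ e := by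
  induction e using Sym2.ind with
  | _ a b =>
    rw [SimpleGraph.mem_edgeSet] at he
    rw [Sym2.mem_iff]
    rintro (rfl | rfl)
    · exact he.2.1 rfl
    · exact he.2.2 rfl

lemma delVert_le {V : Type*} (G : SimpleGraph V) (v : V) (e : Sym2 V)
    (he : e ∈ (delVert G v).edgeSet) : e ∈ G.edgeSet := by
  induction e using Sym2.ind with
  | _ a b => exact he.1

lemma mem_delVert_of_not_mem {V : Type*} (G : SimpleGraph V) (v : V) (e : Sym2 V)
    (he : e ∈ G.edgeSet) (hv : v ∉ e) : e ∈ (delVert G v).edgeSet := by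
  induction e using Sym2.ind with
  | _ a b =>
    rw [Sym2.mem_iff] at hv
    push_neg at hv
    exact ⟨he, fun h => hv.1 h.symm, fun h => hv.2 h.symm⟩

lemma mem_addBack {V : Type*} (G : SimpleGraph V) (v : V) (W : Finset V)
    (hWv : ∀ w ∈ W, w ≠ v) (e : Sym2 V) :
    e ∈ (addBack G v W).edgeSet ↔
      e ∈ (delVert G v).edgeSet ∨ ∃ w ∈ W, e = s(v, w) := by
  rw [addBack, SimpleGraph.edgeSet_fromEdgeSet]
  constructor
  · rintro ⟨h, -⟩; exact h
  · intro h
    refine ⟨h, ?_⟩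
    rcases h with h | ⟨w, hw, rfl⟩
    · exact (delVert G v).not_isDiag_of_mem_edgeSet h
    · simp only [Sym2.mem_diagSet, Sym2.isDiag_iff_proj_eq]
      exact fun h => (hWv w hw) h.symm

lemma scarf_union {V : Type*} [DecidableEq V]
    (G : SimpleGraph V) (v : V) (W : Finset V) (σ : Finset (Sym2 V))
    (H : SimpleGraph V) (hWne : W.Nonempty) (hWv : ∀ w ∈ W, w ≠ v)
    (hσ : IsScarf (delVert G v) σ)
    (hσv : ∀ e ∈ σ, v ∉ e)
    (hσw : ∀ w ∈ W, ∀ e ∈ σ, w ∉ e)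
    (h1 : ∀ e ∈ H.edgeSet, (∀ x ∈ e, x = v ∨ x ∈ W ∨ ∃ f ∈ σ, x ∈ f) →
      v ∈ e → ∃ w ∈ W, e = s(v, w))
    (h2 : ∀ e ∈ H.edgeSet, (∀ x ∈ e, x = v ∨ x ∈ W ∨ ∃ f ∈ σ, x ∈ f) →
      (∃ w ∈ W, w ∈ e) → ∃ w ∈ W, e = s(v, w))
    (h3 : ∀ e ∈ H.edgeSet, v ∉ e → e ∈ (delVert G v).edgeSet)
    (h4 : ∀ e ∈ σ ∪ W.image (fun w => s(v, w)), e ∈ H.edgeSet) :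
    IsScarf H (σ ∪ W.image (fun w => s(v, w))) := by
  classical
  refine ⟨h4, ?_⟩
  intro τ hτE hlcm
  have hcovU : ∀ x : V, (∃ e ∈ σ ∪ W.image (fun w => s(v, w)), x ∈ e) ↔
      (x = v ∨ x ∈ W ∨ ∃ f ∈ σ, x ∈ f) := by
    intro x
    constructor
    · rintro ⟨e, he, hx⟩
      rcases Finset.mem_union.mp he with he | he
      · exact Or.inr (Or.inr ⟨e, he, hx⟩)
      · obtain ⟨w, hw, rfl⟩ := Finset.mem_image.mp he
        rcases Sym2.mem_iff.mp hx with rfl | rfl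
        · exact Or.inl rfl
        · exact Or.inr (Or.inl hw)
    · rintro (rfl | hx | ⟨f, hf, hx⟩)
      · obtain ⟨w, hw⟩ := hWne
        exact ⟨s(x, w), Finset.mem_union_right _ (Finset.mem_image_of_mem _ hw),
          Sym2.mem_mk_left _ _⟩
      · exact ⟨s(v, x), Finset.mem_union_right _ (Finset.mem_image_of_mem _ hx),
          Sym2.mem_mk_right _ _⟩
      · exact ⟨f, Finset.mem_union_left _ hf, hx⟩
  have hcov : ∀ x : V, (∃ e ∈ τ, x ∈ e) ↔ (x = v ∨ x ∈ W ∨ ∃ f ∈ σ, x ∈ f) := by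
    intro x
    rw [← hcovU x]
    exact (eLcm_eq_iff τ _).mp hlcm x
  have hSτ : ∀ e ∈ τ, ∀ x ∈ e, x = v ∨ x ∈ W ∨ ∃ f ∈ σ, x ∈ f :=
    fun e he x hx => (hcov x).mp ⟨e, he, hx⟩
  have himg : ∀ w ∈ W, s(v, w) ∈ τ := by
    intro w hw
    obtain ⟨e, he, hwe⟩ := (hcov w).mpr (Or.inr (Or.inl hw))
    obtain ⟨w', hw', rfl⟩ := h2 e (hτE e he) (hSτ e he) ⟨w, hw, hwe⟩
    rcases Sym2.mem_iff.mp hwe with h | h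
    · exact absurd h (hWv w hw)
    · exact h ▸ he
  set τσ := τ.filter (fun e => v ∉ e) with hτσdef
  have hτσE : ∀ e ∈ τσ, e ∈ (delVert G v).edgeSet := by
    intro e he
    obtain ⟨heτ, hv⟩ := Finset.mem_filter.mp he
    exact h3 e (hτE e heτ) hv
  have hlcmσ : eLcm τσ = eLcm σ := by
    rw [eLcm_eq_iff]
    intro x
    constructor
    · rintro ⟨e, he, hx⟩
      obtain ⟨heτ, hv⟩ := Finset.mem_filter.mp he
      rcases hSτ e heτ x hx with rfl | hxW | h
      · exact absurd hx hv
      · obtain ⟨w', hw', rfl⟩ := h2 e (hτE e heτ) (hSτ e heτ) ⟨x, hxW, hx⟩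
        exact absurd (Sym2.mem_mk_left _ _) hv
      · exact h
    · rintro ⟨f, hf, hx⟩
      obtain ⟨e, he, hxe⟩ := (hcov x).mpr (Or.inr (Or.inr ⟨f, hf, hx⟩))
      refine ⟨e, Finset.mem_filter.mpr ⟨he, ?_⟩, hxe⟩
      intro hv
      obtain ⟨w, hw, rfl⟩ := h1 e (hτE e he) (hSτ e he) hv
      rcases Sym2.mem_iff.mp hxe with rfl | rfl
      · exact hσv f hf hx
      · exact hσw x hw f hf hx
  have hτσσ : τσ = σ := hσ.2 τσ hτσE hlcmσ
  ext e
  rw [Finset.mem_union]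
  constructor
  · intro he
    by_cases hv : v ∈ e
    · obtain ⟨w, hw, rfl⟩ := h1 e (hτE e he) (hSτ e he) hv
      exact Or.inr (Finset.mem_image_of_mem _ hw)
    · exact Or.inl (hτσσ ▸ Finset.mem_filter.mpr ⟨he, hv⟩)
  · rintro (he | he)
    · rw [← hτσσ] at he
      exact (Finset.mem_filter.mp he).1
    · obtain ⟨w, hw, rfl⟩ := Finset.mem_image.mp he
      exact himg w hw

theorem stmt6 {V : Type*} [Fintype V] [DecidableEq V] (G : SimpleGraph V) (v : V)
    (W : Finset V) (hW : ∀ w ∈ W, G.Adj v w) (hWne : W.Nonempty)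
    (σ : Finset (Sym2 V)) (hσ : IsScarf (delVert G v) σ)
    (hd : ∀ w ∈ W, ∀ e ∈ σ, ¬ Dist0 e s(v, w) ∧ ¬ Dist1 G e s(v, w)) :
    ((∃ w ∈ W, ∃ w' ∈ W, w ≠ w' ∧ G.Adj w w') →
        ¬ IsScarf (addBack G v W) (σ ∪ W.image (fun w => s(v, w)))) ∧
    ((∀ w ∈ W, ∀ w' ∈ W, w ≠ w' → ¬ G.Adj w w') →
        IsScarf (addBack G v W) (σ ∪ W.image (fun w => s(v, w))) ∧
          IsScarf G (σ ∪ W.image (fun w => s(v, w)))) := by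
  classical
  obtain ⟨w₀, hw₀⟩ := hWne
  have hWv : ∀ w ∈ W, w ≠ v := fun w hw => (hW w hw).ne'
  have hσv : ∀ e ∈ σ, v ∉ e := fun e he => delVert_not_mem G v e (hσ.1 e he)
  have hσw : ∀ w ∈ W, ∀ e ∈ σ, w ∉ e := by
    intro w hw e he hwe
    exact (hd w hw e he).1 ⟨w, hwe, Sym2.mem_mk_right _ _⟩
  have hadj : ∀ w ∈ W, ∀ e ∈ σ, ∀ x ∈ e, ¬ G.Adj x v ∧ ¬ G.Adj x w := by
    intro w hw e he x hx
    have hD1 := (hd w hw e he).2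
    constructor
    · exact fun hA => hD1 ⟨(hd w hw e he).1, x, hx, v, Sym2.mem_mk_left _ _, hA⟩
    · exact fun hA => hD1 ⟨(hd w hw e he).1, x, hx, w, Sym2.mem_mk_right _ _, hA⟩
  have hmemAB := mem_addBack G v W hWv
  constructor
  · -- Part 1
    rintro ⟨w, hw, w', hw', hne, hA⟩ hSc
    have hww' : s(w, w') ∈ (addBack G v W).edgeSet := by
      rw [hmemAB]
      exact Or.inl ⟨hA, hWv w hw, hWv w' hw'⟩
    have heq := hSc.2 (insert s(w, w') (σ ∪ W.image fun w => s(v, w))) ?_ ?_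
    · have hmem : s(w, w') ∈ σ ∪ W.image (fun w => s(v, w)) :=
        heq ▸ Finset.mem_insert_self _ _
      rcases Finset.mem_union.mp hmem with h | h
      · exact hσw w hw _ h (Sym2.mem_mk_left _ _)
      · obtain ⟨w'', hw'', hequ⟩ := Finset.mem_image.mp h
        rw [Sym2.eq_iff] at hequ
        rcases hequ with ⟨h1, h2⟩ | ⟨h1, h2⟩
        · exact hWv w hw h1.symm
        · exact hWv w' hw' h1.symm
    · intro e he
      rcases Finset.mem_insert.mp he with rfl | he
      · exact hww'
      · exact hSc.1 e he
    · rw [eLcm_eq_iff]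
      intro x
      constructor
      · rintro ⟨e, he, hx⟩
        rcases Finset.mem_insert.mp he with rfl | he
        · rcases Sym2.mem_iff.mp hx with rfl | rfl
          · exact ⟨s(v, x), Finset.mem_union_right _ (Finset.mem_image_of_mem _ hw),
              Sym2.mem_mk_right _ _⟩
          · exact ⟨s(v, x), Finset.mem_union_right _ (Finset.mem_image_of_mem _ hw'),
              Sym2.mem_mk_right _ _⟩
        · exact ⟨e, he, hx⟩
      · rintro ⟨e, he, hx⟩
        exact ⟨e, Finset.mem_insert_of_mem he, hx⟩
  · -- Part 2
    intro hind
    constructor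
    · refine scarf_union G v W σ (addBack G v W) ⟨w₀, hw₀⟩ hWv hσ hσv hσw ?_ ?_ ?_ ?_
      · -- h1
        intro e heE _ hv
        rcases (hmemAB e).mp heE with h | h
        · exact absurd hv (delVert_not_mem G v e h)
        · exact h
      · -- h2
        rintro e heE hS ⟨w, hw, hwe⟩
        rcases (hmemAB e).mp heE with h | h
        · exfalso
          have hspec := Sym2.other_spec' hwe
          have hAdj : (delVert G v).Adj w (Sym2.Mem.other' hwe) := by
            rw [← SimpleGraph.mem_edgeSet, hspec]; exact h
          have hu : Sym2.Mem.other' hwe ∈ e := Sym2.other_mem' hwe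
          rcases hS _ hu with rfl | huW | ⟨f, hf, hxf⟩
          · exact hAdj.2.2 rfl
          · exact hind w hw _ huW hAdj.1.ne hAdj.1
          · exact (hadj w hw f hf _ hxf).2 hAdj.1.symm
        · exact h
      · -- h3
        intro e heE hv
        rcases (hmemAB e).mp heE with h | h
        · exact h
        · obtain ⟨w, hw, rfl⟩ := h
          exact absurd (Sym2.mem_mk_left _ _) hv
      · -- h4
        intro e he
        rcases Finset.mem_union.mp he with h | h
        · exact (hmemAB e).mpr (Or.inl (hσ.1 e h))
        · obtain ⟨w, hw, rfl⟩ := Finset.mem_image.mp h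
          exact (hmemAB _).mpr (Or.inr ⟨w, hw, rfl⟩)
    · refine scarf_union G v W σ G ⟨w₀, hw₀⟩ hWv hσ hσv hσw ?_ ?_ ?_ ?_
      · -- h1
        intro e heE hS hv
        have hspec := Sym2.other_spec' hv
        have hAdj : G.Adj v (Sym2.Mem.other' hv) := by
          rw [← SimpleGraph.mem_edgeSet, hspec]; exact heE
        have hu : Sym2.Mem.other' hv ∈ e := Sym2.other_mem' hv
        rcases hS _ hu with h | huW | ⟨f, hf, hxf⟩
        · exact absurd h.symm hAdj.ne
        · exact ⟨_, huW, hspec.symm⟩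
        · exact absurd hAdj.symm (hadj w₀ hw₀ f hf _ hxf).1
      · -- h2
        rintro e heE hS ⟨w, hw, hwe⟩
        have hspec := Sym2.other_spec' hwe
        have hAdj : G.Adj w (Sym2.Mem.other' hwe) := by
          rw [← SimpleGraph.mem_edgeSet, hspec]; exact heE
        have hu : Sym2.Mem.other' hwe ∈ e := Sym2.other_mem' hwe
        rcases hS _ hu with h | huW | ⟨f, hf, hxf⟩
        · refine ⟨w, hw, ?_⟩
          rw [← hspec, h, Sym2.eq_swap]
        · exact absurd hAdj (hind w hw _ huW hAdj.ne)
        · exact absurd hAdj.symm (hadj w hw f hf _ hxf).2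
      · -- h3
        intro e heE hv
        exact mem_delVert_of_not_mem G v e heE hv
      · -- h4
        intro e he
        rcases Finset.mem_union.mp he with h | h
        · exact delVert_le G v e (hσ.1 e h)
        · obtain ⟨w, hw, rfl⟩ := Finset.mem_image.mp h
          exact hW w hw
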